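/- Let X be a nonempty finite type, p^pre a positive probability mass function on X, r : X → ℝ, and α > 0. Then for every probability mass function q on X, E_q[r] − α · KL(q ‖ p^pre) ≤ α · log Σ_x p^pre(x) exp(r(x)/α), and equality holds for the exponentially tilted distribution q*(x) = p^pre(x) exp(r(x)/α) / Σ_y p^pre(y) exp(r(y)/α). -/

import Mathlib

open Real

/-- KL divergence between two mass functions on a finite type, with the
convention `0 * log 0 = 0` (automatic, since `0 * _ = 0` in `ℝ`). -/
noncomputable def KLd {Y : Type*} [Fintype Y] (p q : Y → ℝ) : ℝ :=
  ∑ y, p y * Real.log (p y / q y)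

/-- Product of transition probabilities along a trajectory `(x_{t-1}, …, x_0)`
(encoded as `y : Fin t → X`, with `y i = x_i`) starting from `x_t = x`:
`∏_{s=t}^{1} p_{s-1}(x_{s-1} | x_s)`. -/
noncomputable def chainProd {X : Type*} (p : ℕ → X → X → ℝ) (t : ℕ) (x : X)
    (y : Fin t → X) : ℝ :=
  ∏ s : Fin t, p s (if h : (s : ℕ) + 1 < t then y ⟨(s : ℕ) + 1, h⟩ else x) (y s)

/-- The soft value functions: `v_0 = r` and, for `t ≥ 1`,
`v_t(x) = α * log ∑_{x_{t-1},…,x_0} (∏_{s=t}^{1} p_{s-1}(x_{s-1}|x_s)) exp(r(x_0)/α)`. -/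
noncomputable def softValue {X : Type*} [Fintype X] (p : ℕ → X → X → ℝ) (r : X → ℝ)
    (α : ℝ) : ℕ → X → ℝ
  | 0, x => r x
  | (t + 1), x =>
      α * Real.log (∑ y : Fin (t + 1) → X,
        chainProd p (t + 1) x y * Real.exp (r (y 0) / α))

/-- The soft-optimal policy
`p*_{t-1}(y|x) = p^pre_{t-1}(y|x) * exp(v_{t-1}(y)/α) / exp(v_t(x)/α)`.
The index `t : ℕ` here stands for `t-1`, so it uses `v_t` and `v_{t+1}`. -/
noncomputable def softOpt {X : Type*} [Fintype X] (p : ℕ → X → X → ℝ) (r : X → ℝ)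
    (α : ℝ) (t : ℕ) (x y : X) : ℝ :=
  p t x y * Real.exp (softValue p r α t y / α) / Real.exp (softValue p r α (t + 1) x / α)

/-- The joint trajectory distribution
`P^q_μ(x_T,…,x_0) = μ(x_T) * ∏_{t=T}^{1} q_{t-1}(x_{t-1}|x_t)`, a trajectory being
encoded as `x : Fin (T+1) → X` with `x i = x_i` (so `x (Fin.last T) = x_T`). -/
noncomputable def trajProb {X : Type*} (μ : X → ℝ) (q : ℕ → X → X → ℝ) (T : ℕ)
    (x : Fin (T + 1) → X) : ℝ :=
  μ (x (Fin.last T)) * ∏ t : Fin T, q t (x t.succ) (x t.castSucc)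

/-- Expectation of `f` under the joint trajectory distribution `P^q_μ`. -/
noncomputable def trajExp {X : Type*} [Fintype X] (μ : X → ℝ) (q : ℕ → X → X → ℝ)
    (T : ℕ) (f : (Fin (T + 1) → X) → ℝ) : ℝ :=
  ∑ x : Fin (T + 1) → X, trajProb μ q T x * f x

/-- `q` is a policy sequence for horizon `T`: for each `t < T` (our index `t`
stands for `t-1` with `1 ≤ t ≤ T`), `q t x ·` is a probability mass function. -/
def IsPolicy {X : Type*} [Fintype X] (T : ℕ) (q : ℕ → X → X → ℝ) : Prop :=
  ∀ t < T, ∀ x : X, (∀ y : X, 0 ≤ q t x y) ∧ (∑ y, q t x y) = 1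

/-- A policy sequence is positive if all its transition probabilities are positive. -/
def IsPositive {X : Type*} (T : ℕ) (q : ℕ → X → X → ℝ) : Prop :=
  ∀ t < T, ∀ x y : X, 0 < q t x y

/-- single-step Gibbs variational bound: for every pmf `q`,
`E_q[r] − α·KL(q ‖ p^pre) ≤ α · log ∑_x p^pre(x) exp(r(x)/α)`, with equality for
the exponentially tilted distribution `q*(x) = p^pre(x) exp(r(x)/α) / ∑_y p^pre(y) exp(r(y)/α)`. -/
theorem statement8 {X : Type*} [Fintype X] [Nonempty X]
    (ppre : X → ℝ) (hppos : ∀ x, 0 < ppre x) (hpsum : (∑ x, ppre x) = 1)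
    (r : X → ℝ) (α : ℝ) (hα : 0 < α) :
    (∀ q : X → ℝ, (∀ x, 0 ≤ q x) → (∑ x, q x) = 1 →
        (∑ x, q x * r x) - α * KLd q ppre
          ≤ α * Real.log (∑ x, ppre x * Real.exp (r x / α)))
    ∧ ((∑ x, (ppre x * Real.exp (r x / α) / ∑ y, ppre y * Real.exp (r y / α)) * r x)
          - α * KLd
              (fun x => ppre x * Real.exp (r x / α) / ∑ y, ppre y * Real.exp (r y / α))
              ppre
        = α * Real.log (∑ x, ppre x * Real.exp (r x / α))) := by
  set Z : ℝ := ∑ x, ppre x * Real.exp (r x / α) with hZdef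
  have hw : ∀ x : X, 0 < ppre x * Real.exp (r x / α) := fun x =>
    mul_pos (hppos x) (Real.exp_pos _)
  have hZ : 0 < Z := Finset.sum_pos (fun x _ => hw x) Finset.univ_nonempty
  constructor
  · intro q hq hqsum
    have key : ∀ x : X,
        q x * r x - α * (q x * Real.log (q x / ppre x))
          ≤ α * (ppre x * Real.exp (r x / α) / Z - q x) + α * (q x * Real.log Z) := by
      intro x
      rcases eq_or_lt_of_le (hq x) with h0 | h0
      · rw [← h0]
        simp
        nlinarith [mul_pos hα (div_pos (hw x) hZ)]
      · set t : ℝ := ppre x * Real.exp (r x / α) / (Z * q x) with htdef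
        have ht : 0 < t := div_pos (hw x) (mul_pos hZ h0)
        have hlogt : Real.log t = r x / α - Real.log (q x / ppre x) - Real.log Z := by
          rw [htdef, Real.log_div (hw x).ne' (mul_pos hZ h0).ne',
            Real.log_mul (hppos x).ne' (Real.exp_pos _).ne', Real.log_exp,
            Real.log_mul hZ.ne' h0.ne', Real.log_div h0.ne' (hppos x).ne']
          ring
        have hle : Real.log t ≤ t - 1 := Real.log_le_sub_one_of_pos ht
        have h2 : q x * Real.log t ≤ ppre x * Real.exp (r x / α) / Z - q x := by
          have := mul_le_mul_of_nonneg_left hle (le_of_lt h0)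
          calc q x * Real.log t ≤ q x * (t - 1) := this
            _ = ppre x * Real.exp (r x / α) / Z - q x := by
                rw [htdef]; field_simp
        have h3 : q x * (r x / α - Real.log (q x / ppre x) - Real.log Z)
            ≤ ppre x * Real.exp (r x / α) / Z - q x := by rw [← hlogt]; exact h2
        have h4 := mul_le_mul_of_nonneg_left h3 (le_of_lt hα)
        have he : α * (q x * (r x / α - Real.log (q x / ppre x) - Real.log Z))
            = q x * r x - α * (q x * Real.log (q x / ppre x))
              - α * (q x * Real.log Z) := by
          field_simp
        linarith [h4, he.symm.le, he.le]
    have hsum := Finset.sum_le_sum (s := Finset.univ) (fun x _ => key x)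
    have hL : ∑ x, (q x * r x - α * (q x * Real.log (q x / ppre x)))
        = (∑ x, q x * r x) - α * KLd q ppre := by
      rw [KLd, Finset.sum_sub_distrib, Finset.mul_sum]
    have hR : ∑ x, (α * (ppre x * Real.exp (r x / α) / Z - q x) + α * (q x * Real.log Z))
        = α * Real.log Z := by
      rw [Finset.sum_add_distrib, ← Finset.mul_sum, ← Finset.mul_sum,
        Finset.sum_sub_distrib, ← Finset.sum_div, ← hZdef, div_self hZ.ne', hqsum]
      rw [show ∑ x, q x * Real.log Z = (∑ x, q x) * Real.log Z from
        (Finset.sum_mul ..).symm, hqsum]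
      ring
    rw [hL] at hsum
    rw [hR] at hsum
    exact hsum
  · have hqs : ∑ x, ppre x * Real.exp (r x / α) / Z = 1 := by
      rw [← Finset.sum_div, ← hZdef, div_self hZ.ne']
    have hKL : KLd (fun x => ppre x * Real.exp (r x / α) / ∑ y, ppre y * Real.exp (r y / α))
        ppre = (∑ x, (ppre x * Real.exp (r x / α) / Z) * r x) / α - Real.log Z := by
      rw [KLd]
      have : ∀ x : X, (ppre x * Real.exp (r x / α) / Z) *
          Real.log ((ppre x * Real.exp (r x / α) / Z) / ppre x)
          = (ppre x * Real.exp (r x / α) / Z) * (r x / α - Real.log Z) := by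
        intro x
        congr 1
        rw [show (ppre x * Real.exp (r x / α) / Z) / ppre x = Real.exp (r x / α) / Z by
          rw [div_div, mul_comm Z (ppre x), mul_div_mul_left _ _ (hppos x).ne']]
        rw [Real.log_div (Real.exp_pos _).ne' hZ.ne', Real.log_exp]
      simp only [← hZdef]
      rw [Finset.sum_congr rfl (fun x _ => this x)]
      simp only [mul_sub]
      rw [Finset.sum_sub_distrib]
      congr 1
      · rw [Finset.sum_div]
        exact Finset.sum_congr rfl (fun x _ => (mul_div_assoc _ _ _).symm)
      · rw [show ∑ x, (ppre x * Real.exp (r x / α) / Z) * Real.log Z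
          = (∑ x, ppre x * Real.exp (r x / α) / Z) * Real.log Z from
          (Finset.sum_mul ..).symm, hqs, one_mul]
    rw [hKL]
    field_simp
    ring
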